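/- arXiv:2502.08035 — 4 statements merged into one kernel-verified Lean document; each statement's English description precedes it below -/
import Mathlib

section
/- Let α > 0, c ≥ 0 with 4(α+1)c ≤ 1, f(η) = (αη² + c)/(1 − η), and let γ∞ be the smaller root of (α+1)η² − η + c = 0. If a sequence (η_k) of nonnegative reals satisfies η_{k+1} ≤ f(η_k) for all k and η₀ < γ₀ (the larger root), then limsup_{k→∞} η_k ≤ γ∞. -/
set_option maxHeartbeats 1000000


open Filter

/-- Core convergence claim of Theorem 1 (local convergence of PGD), abstracted:
a nonnegative sequence dominated by `f(η) = (αη² + c)/(1 − η)` and started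
below the larger root `γ₀` has `limsup ≤ γ∞`, the smaller root. -/
theorem pgd_error_limsup_le (α c : ℝ) (hα : 0 < α) (hc : 0 ≤ c)
    (hsmall : 4 * (α + 1) * c ≤ 1)
    (f : ℝ → ℝ) (hf : ∀ η, f η = (α * η ^ 2 + c) / (1 - η))
    (γinf γ0 : ℝ)
    (hγinf : γinf = (1 - Real.sqrt (1 - 4 * (α + 1) * c)) / (2 * (α + 1)))
    (hγ0 : γ0 = (1 + Real.sqrt (1 - 4 * (α + 1) * c)) / (2 * (α + 1)))
    (η : ℕ → ℝ) (hnonneg : ∀ k, 0 ≤ η k)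
    (hrec : ∀ k, η (k + 1) ≤ f (η k)) (hinit : η 0 < γ0) :
    Filter.limsup η Filter.atTop ≤ γinf := by
  have hA : (1:ℝ) < α + 1 := by linarith
  have hA0 : (0:ℝ) < α + 1 := by linarith
  have hD : (0:ℝ) ≤ 1 - 4 * (α + 1) * c := by linarith
  set s := Real.sqrt (1 - 4 * (α + 1) * c) with hsdef
  have hs2 : s ^ 2 = 1 - 4 * (α + 1) * c := Real.sq_sqrt hD
  have hs0 : 0 ≤ s := Real.sqrt_nonneg _
  have hs1 : s ≤ 1 := by nlinarith
  have hγinf0 : 0 ≤ γinf := by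
    rw [hγinf]; apply div_nonneg <;> linarith
  have hle : γinf ≤ γ0 := by
    rw [hγinf, hγ0]; gcongr ?_ / _ <;> linarith
  have hγ0lt1 : γ0 < 1 := by
    rw [hγ0, div_lt_one (by linarith)]; nlinarith
  -- quadratic factorization
  have hq : ∀ x : ℝ, (α + 1) * x ^ 2 - x + c = (α + 1) * (x - γinf) * (x - γ0) := by
    intro x
    rw [hγinf, hγ0]
    field_simp
    ring_nf
    nlinarith [hs2]
  have hfx : ∀ x : ℝ, x < 1 → f x = x + ((α + 1) * (x - γinf) * (x - γ0)) / (1 - x) := by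
    intro x hx
    rw [hf, ← hq]
    have h1 : (1:ℝ) - x ≠ 0 := by linarith
    field_simp
    ring
  have hmono : ∀ x y : ℝ, 0 ≤ x → x ≤ y → y < 1 → f x ≤ f y := by
    intro x y hx hxy hy1
    rw [hf, hf, div_le_div_iff₀ (by linarith) (by linarith)]
    nlinarith [mul_nonneg (sub_nonneg.2 hxy)
      (by nlinarith [mul_nonneg (mul_nonneg hα.le hx) (by linarith : (0:ℝ) ≤ 1 - y)] :
        (0:ℝ) ≤ α * x * (1 - y) + α * y + c)]
  set M := max (η 0) γinf with hM
  have hγinfM : γinf ≤ M := le_max_right _ _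
  have hM0 : 0 ≤ M := le_trans hγinf0 hγinfM
  have hMγ0 : M ≤ γ0 := max_le (le_of_lt hinit) hle
  have hM1 : M < 1 := lt_of_le_of_lt hMγ0 hγ0lt1
  have hfM : f M ≤ M := by
    rw [hfx M hM1]
    have : ((α + 1) * (M - γinf) * (M - γ0)) / (1 - M) ≤ 0 := by
      apply div_nonpos_of_nonpos_of_nonneg
      · have := mul_nonneg (le_of_lt hA0) (sub_nonneg.2 hγinfM)
        nlinarith
      · linarith
    linarith
  have hbound : ∀ k, η k ≤ M := by
    intro k
    induction k with
    | zero => exact le_max_left _ _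
    | succ k ih =>
      calc η (k + 1) ≤ f (η k) := hrec k
        _ ≤ f M := hmono _ _ (hnonneg k) ih hM1
        _ ≤ M := hfM
  have hcob : IsCoboundedUnder (· ≤ ·) atTop η :=
    isCoboundedUnder_le_of_le atTop (x := 0) hnonneg
  apply le_of_forall_pos_le_add
  intro ε hε
  by_cases hMc : M ≤ γinf + ε
  · calc limsup η atTop ≤ M := limsup_le_of_le hcob (Eventually.of_forall hbound)
      _ ≤ γinf + ε := hMc
  push_neg at hMc
  set γ := γinf + ε with hγdef
  have hγM : γ < M := hMc
  have hMη0 : M = η 0 := by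
    rcases max_cases (η 0) γinf with ⟨h1, h2⟩ | ⟨h1, h2⟩
    · exact h1
    · exfalso; rw [hM] at hγM; linarith [hγM.trans_le (le_of_eq h1)]
  have hMγ0' : M < γ0 := by rw [hMη0]; exact hinit
  have hγγ0 : γ < γ0 := lt_trans hγM hMγ0'
  have hγ1 : γ < 1 := lt_trans hγγ0 hγ0lt1
  have hγpos : 0 < γ := by simp only [hγdef]; linarith
  set m := (α + 1) * (γ - γinf) * (γ0 - M) with hmdef
  have hmpos : 0 < m := by
    apply mul_pos (mul_pos hA0 (by simp only [hγdef]; linarith)) (by linarith)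
  -- fixed point at γ
  have hfγ : f γ ≤ γ := by
    rw [hfx γ hγ1]
    have : ((α + 1) * (γ - γinf) * (γ - γ0)) / (1 - γ) ≤ 0 := by
      apply div_nonpos_of_nonpos_of_nonneg
      · have h1 : 0 ≤ (α + 1) * (γ - γinf) := by
          apply mul_nonneg (le_of_lt hA0); simp only [hγdef]; linarith
        nlinarith
      · linarith
    linarith
  -- decrease by m on [γ, M]
  have hdec : ∀ x : ℝ, γ ≤ x → x ≤ M → f x ≤ x - m := by
    intro x hx1 hx2
    have hx1' : x < 1 := lt_of_le_of_lt hx2 hM1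
    rw [hfx x hx1']
    have hkey : ((α + 1) * (x - γinf) * (x - γ0)) / (1 - x) ≤ -m := by
      rw [div_le_iff₀ (by linarith)]
      have h1 : m ≤ (α + 1) * (x - γinf) * (γ0 - x) := by
        rw [hmdef]
        gcongr <;> nlinarith [hε, hγdef, hx1, hA0]
      nlinarith [mul_nonneg (le_of_lt hmpos) (le_trans (le_of_lt hγpos) hx1)]
    linarith
  -- main decay estimate
  have hstep : ∀ k : ℕ, η k ≤ max γ (M - k * m) := by
    intro k
    induction k with
    | zero => simp; right; exact hbound 0
    | succ k ih =>
      by_cases h : η k ≤ γ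
      · have : η (k + 1) ≤ γ := by
          calc η (k + 1) ≤ f (η k) := hrec k
            _ ≤ f γ := hmono _ _ (hnonneg k) h hγ1
            _ ≤ γ := hfγ
        exact le_max_of_le_left this
      · push_neg at h
        have hk1 : η (k + 1) ≤ η k - m :=
          le_trans (hrec k) (hdec (η k) (le_of_lt h) (hbound k))
        have hk2 : η k ≤ max γ (M - k * m) := ih
        rcases le_total γ (M - k * m) with hc1 | hc1
        · have : η (k + 1) ≤ M - (k + 1) * m := by
            rw [max_eq_right hc1] at hk2
            push_cast
            linarith
          exact le_max_of_le_right (by push_cast at this ⊢; linarith)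
        · rw [max_eq_left hc1] at hk2
          exact le_max_of_le_left (by linarith)
  have hev : ∀ᶠ k in atTop, η k ≤ γ := by
    rw [eventually_atTop]
    refine ⟨⌈(M - γ) / m⌉₊, fun k hk => ?_⟩
    have h1 : (M - γ) / m ≤ (k : ℝ) := le_trans (Nat.le_ceil _) (by exact_mod_cast hk)
    have h2 : M - (k : ℝ) * m ≤ γ := by
      rw [div_le_iff₀ hmpos] at h1
      linarith
    exact le_trans (hstep k) (max_le le_rfl h2)
  exact limsup_le_of_le hcob hev
end

section
/- Let α > 0 and define f(η) = αη²/(1 − η) for η ∈ [0,1). If a sequence (η_k) of nonnegative reals satisfies η_{k+1} ≤ f(η_k) for all k and η₀ < 1/(α+1), then η_k → 0, and moreover the convergence is quadratic in the sense that η_{k+1} ≤ (α/(1 − η₀)) η_k² for all k. -/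
open Filter

/-- Noiseless case of the PGD error recursion: the error converges to zero
quadratically when initialized in the basin of attraction. -/
theorem pgd_noiseless_quadratic_convergence (α : ℝ) (hα : 0 < α)
    (f : ℝ → ℝ) (hf : ∀ η, f η = α * η ^ 2 / (1 - η))
    (η : ℕ → ℝ) (hnonneg : ∀ k, 0 ≤ η k)
    (hrec : ∀ k, η (k + 1) ≤ f (η k)) (hinit : η 0 < 1 / (α + 1)) :
    Filter.Tendsto η Filter.atTop (nhds 0) ∧
      ∀ k, η (k + 1) ≤ (α / (1 - η 0)) * (η k) ^ 2 := by
  have hη0 := hnonneg 0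
  have hα1 : (0:ℝ) < α + 1 := by linarith
  have hlt1 : η 0 < 1 := lt_of_lt_of_le hinit (by rw [div_le_one hα1]; linarith)
  have h1 : 0 < 1 - η 0 := by linarith
  have hm : η 0 * (α + 1) < 1 := (lt_div_iff₀ hα1).mp hinit
  have haη : α * η 0 < 1 - η 0 := by nlinarith
  set c : ℝ := α / (1 - η 0) with hc_def
  have hc : 0 ≤ c := by positivity
  set r : ℝ := c * η 0 with hr_def
  have hr0 : 0 ≤ r := mul_nonneg hc hη0
  have hr1 : r < 1 := by
    rw [hr_def, hc_def, div_mul_eq_mul_div, div_lt_one h1]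
    nlinarith
  have key : ∀ k, η k ≤ η 0 → η (k + 1) ≤ c * η k ^ 2 := by
    intro k hk
    have hk0 := hnonneg k
    have hk1 : 0 < 1 - η k := by linarith
    have h2 := hrec k
    rw [hf] at h2
    refine h2.trans ?_
    have heq : c * η k ^ 2 = α * η k ^ 2 / (1 - η 0) := by
      rw [hc_def]; ring
    rw [heq, div_le_div_iff₀ hk1 h1]
    exact mul_le_mul_of_nonneg_left (by linarith) (by positivity)
  have hmono : ∀ k, η k ≤ η 0 ∧ η k ≤ r ^ k * η 0 := by
    intro k
    induction k with
    | zero => simp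
    | succ n ih =>
      obtain ⟨ha, hb⟩ := ih
      have hk := key n ha
      have hstep : η (n + 1) ≤ r * η n := by
        have h3 : c * η n ^ 2 ≤ c * η 0 * η n := by
          nlinarith [mul_nonneg hc (hnonneg n)]
        have h4 : c * η 0 * η n = r * η n := by rw [hr_def]
        linarith [hk, h3]
      constructor
      · calc η (n + 1) ≤ r * η n := hstep
          _ ≤ 1 * η 0 := mul_le_mul hr1.le ha (hnonneg n) zero_le_one
          _ = η 0 := one_mul _
      · calc η (n + 1) ≤ r * η n := hstep
          _ ≤ r * (r ^ n * η 0) := mul_le_mul_of_nonneg_left hb hr0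
          _ = r ^ (n + 1) * η 0 := by ring
  constructor
  · have hlim : Tendsto (fun k => r ^ k * η 0) atTop (nhds 0) := by
      have := (tendsto_pow_atTop_nhds_zero_of_lt_one hr0 hr1).mul_const (η 0)
      simpa using this
    exact squeeze_zero hnonneg (fun k => (hmono k).2) hlim
  · exact fun k => key k (hmono k).1
end

section
/- Let α > 0, c > 0 with 4(α+1)c < 1, f(η) = (αη² + c)/(1 − η), and γ∞ the smaller fixed point. Then the derivative of f at γ∞ satisfies 0 ≤ f'(γ∞) < 1, so γ∞ is an attracting fixed point of f. -/
/-- The smaller fixed point `γ∞` of the PGD error-bound map is attracting: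
`0 ≤ f'(γ∞) < 1`. -/
theorem smaller_fixed_point_attracting (α c : ℝ) (hα : 0 < α) (hc : 0 < c)
    (hsmall : 4 * (α + 1) * c < 1)
    (f : ℝ → ℝ) (hf : ∀ η, f η = (α * η ^ 2 + c) / (1 - η))
    (γinf : ℝ)
    (hγinf : γinf = (1 - Real.sqrt (1 - 4 * (α + 1) * c)) / (2 * (α + 1))) :
    0 ≤ deriv f γinf ∧ deriv f γinf < 1 := by
  have hfe : f = fun η => (α * η ^ 2 + c) / (1 - η) := funext hf
  subst hfe
  set s := Real.sqrt (1 - 4 * (α + 1) * c) with hs_def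
  have hD : 0 < 1 - 4 * (α + 1) * c := by linarith
  have hspos : 0 < s := Real.sqrt_pos.mpr hD
  have hs2 : s ^ 2 = 1 - 4 * (α + 1) * c := Real.sq_sqrt hD.le
  have hs1 : s < 1 := by
    nlinarith [Real.sq_sqrt hD.le, mul_pos (mul_pos (by linarith : (0:ℝ) < 4) (by linarith : (0:ℝ) < α + 1)) hc]
  have hαpos : 0 < 2 * (α + 1) := by linarith
  have hγeq : 2 * (α + 1) * γinf = 1 - s := by
    rw [hγinf]; field_simp
  have hγpos : 0 < γinf := by
    rw [hγinf]; apply div_pos <;> linarith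
  have hγlt : γinf < 1 / 2 := by
    nlinarith
  have h1γ : 0 < 1 - γinf := by linarith
  have hne : 1 - γinf ≠ 0 := ne_of_gt h1γ
  -- derivative computation
  have hA : HasDerivAt (fun η : ℝ => α * η ^ 2 + c) (2 * α * γinf) γinf := by
    have := ((hasDerivAt_pow 2 γinf).const_mul α).add_const c
    simpa [mul_comm, mul_assoc, mul_left_comm] using this
  have hB : HasDerivAt (fun η : ℝ => 1 - η) (-1) γinf := by
    simpa using (hasDerivAt_id γinf).const_sub 1
  have hdiv := hA.div hB hne
  have hderiv : deriv (fun η : ℝ => (α * η ^ 2 + c) / (1 - η)) γinf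
      = (2 * α * γinf * (1 - γinf) + (α * γinf ^ 2 + c)) / (1 - γinf) ^ 2 := by
    have := hdiv.deriv
    rw [show (fun η : ℝ => (α * η ^ 2 + c) / (1 - η)) = ((fun η : ℝ => α * η ^ 2 + c) / fun η : ℝ => 1 - η) from rfl, this]; ring
  rw [hderiv]
  have hquad : (α + 1) * γinf ^ 2 - γinf + c = 0 := by
    have h4 : (2 * (α + 1) * γinf) ^ 2 = (1 - s) ^ 2 := by rw [hγeq]
    nlinarith [h4, hs2]
  constructor
  · apply div_nonneg
    · nlinarith
    · positivity
  · rw [div_lt_one (by positivity)]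
    nlinarith [mul_pos h1γ hspos, mul_pos hγpos hspos]
end

section
/- Let f(η) = (αη² + c)/(1 − η) with α > 0, c ≥ 0, 4(α+1)c < 1, and let γ∞ < γ₀ be the roots of (α+1)η² − η + c = 0. Define the sequence γ_{k+1} = f(γ_k) with γ₀' ∈ (γ∞, γ₀). Then (γ_k) is strictly decreasing and converges to γ∞. -/
open Filter

/-- The majorizing sequence of Theorem 1: iterating the error-bound map
`f(η) = (αη² + c)/(1 − η)` from any point strictly between its two fixed
points yields a strictly decreasing sequence converging to the attracting
fixed point `γ∞`. -/
theorem majorizing_sequence_converges (α c : ℝ) (hα : 0 < α) (hc : 0 ≤ c)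
    (hsmall : 4 * (α + 1) * c < 1)
    (γinf γ0 : ℝ) (hlt : γinf < γ0)
    (hroot1 : (α + 1) * γinf ^ 2 - γinf + c = 0)
    (hroot2 : (α + 1) * γ0 ^ 2 - γ0 + c = 0)
    (f : ℝ → ℝ) (hf : ∀ η, f η = (α * η ^ 2 + c) / (1 - η))
    (γ : ℕ → ℝ) (hinit : γ 0 ∈ Set.Ioo γinf γ0)
    (hrec : ∀ k, γ (k + 1) = f (γ k)) :
    StrictAnti γ ∧ Filter.Tendsto γ Filter.atTop (nhds γinf) := by
  have hα1 : (0:ℝ) < α + 1 := by linarith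
  have hsum : (α + 1) * (γinf + γ0) = 1 := by
    have h : (γinf - γ0) * ((α + 1) * (γinf + γ0) - 1) = 0 := by
      linear_combination hroot1 - hroot2
    rcases mul_eq_zero.1 h with h | h
    · exact absurd (sub_eq_zero.1 h) (ne_of_lt hlt)
    · linarith [sub_eq_zero.1 h]
  have hprod : (α + 1) * (γinf * γ0) = c := by
    linear_combination γinf * hsum - hroot1
  have hγinf0 : 0 ≤ γinf := by
    by_contra h
    push_neg at h
    have hγ0pos : 0 < γ0 := by nlinarith
    nlinarith [mul_pos (neg_pos.2 h) hγ0pos]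
  have hγ01 : γ0 < 1 := by nlinarith
  have key : ∀ x, γinf < x → x < γ0 → γinf < f x ∧ f x < x := by
    intro x h1 h2
    have hx1 : x < 1 := lt_trans h2 hγ01
    have hpos : 0 < 1 - x := by linarith
    have hxpos : 0 < x := lt_of_le_of_lt hγinf0 h1
    rw [hf]
    constructor
    · rw [lt_div_iff₀ hpos]
      have hid2 : (α * x ^ 2 + c) - γinf * (1 - x)
          = (x - γinf) * (α * (x + γinf) + γinf) := by linear_combination hroot1
      have hfac : 0 < α * (x + γinf) + γinf := by nlinarith
      nlinarith [mul_pos (sub_pos.2 h1) hfac]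
    · rw [div_lt_iff₀ hpos]
      have hid : x * (1 - x) - (α * x ^ 2 + c)
          = (α + 1) * ((x - γinf) * (γ0 - x)) := by
        linear_combination hprod - x * hsum
      nlinarith [mul_pos hα1 (mul_pos (sub_pos.2 h1) (sub_pos.2 h2))]
  have inv : ∀ k, γinf < γ k ∧ γ k < γ0 := by
    intro k
    induction k with
    | zero => exact ⟨hinit.1, hinit.2⟩
    | succ n ih =>
      obtain ⟨h1, h2⟩ := ih
      obtain ⟨ha, hb⟩ := key _ h1 h2
      rw [hrec]
      exact ⟨ha, lt_trans hb h2⟩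
  have hanti : StrictAnti γ := by
    apply strictAnti_nat_of_succ_lt
    intro n
    rw [hrec]
    exact (key _ (inv n).1 (inv n).2).2
  have hbdd : BddBelow (Set.range γ) := by
    refine ⟨γinf, ?_⟩
    rintro y ⟨n, rfl⟩
    exact (inv n).1.le
  have hconv : Tendsto γ atTop (nhds (⨅ n, γ n)) :=
    tendsto_atTop_ciInf hanti.antitone hbdd
  set L := ⨅ n, γ n with hL
  have hLge : γinf ≤ L := le_ciInf fun n => (inv n).1.le
  have hLlt : L < γ0 := lt_of_le_of_lt (ciInf_le hbdd 0) hinit.2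
  have hL1 : L < 1 := lt_trans hLlt hγ01
  have hfe : f = fun η => (α * η ^ 2 + c) / (1 - η) := funext hf
  have hne : (1 : ℝ) - L ≠ 0 := by linarith
  have hcont : ContinuousAt f L := by
    rw [hfe]
    exact ContinuousAt.div (by fun_prop) (by fun_prop) hne
  have ht1 : Tendsto (fun n => γ (n + 1)) atTop (nhds L) :=
    hconv.comp (tendsto_add_atTop_nat 1)
  have ht2 : Tendsto (fun n => f (γ n)) atTop (nhds (f L)) :=
    hcont.tendsto.comp hconv
  have hfix : f L = L := by
    have : (fun n => γ (n + 1)) = fun n => f (γ n) := funext hrec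
    rw [this] at ht1
    exact tendsto_nhds_unique ht2 ht1
  rw [hf] at hfix
  have heq : α * L ^ 2 + c = L * (1 - L) := by
    field_simp at hfix
    linarith [hfix]
  have h0 : (α + 1) * ((L - γinf) * (L - γ0)) = 0 := by
    linear_combination heq - L * hsum + hprod
  have hLeq : L = γinf := by
    rcases mul_eq_zero.1 h0 with h | h
    · linarith
    · rcases mul_eq_zero.1 h with h | h
      · linarith [sub_eq_zero.1 h]
      · exact absurd (sub_eq_zero.1 h) (ne_of_lt hLlt)
  exact ⟨hanti, hLeq ▸ hconv⟩
end
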